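/- arXiv:1409.7904 — 2 statements merged into one kernel-verified Lean document; each statement's English description precedes it below -/
import Mathlib

section
/- If R is a periodic ring and M is an R-R-bimodule, then the trivial extension T(R, M) = R ⊕ M, with multiplication (r₁, m₁)(r₂, m₂) = (r₁r₂, r₁m₂ + m₁r₂), is a periodic ring; conversely, if T(R, M) is periodic then so is R. -/
/-- A ring is periodic if every element satisfies `a ^ m = a ^ n` for distinct `m, n`. -/
def IsPeriodicRing (R : Type*) [Ring R] : Prop :=
  ∀ a : R, ∃ m n : ℕ, m ≠ n ∧ a ^ m = a ^ n

private lemma pow_stab {R : Type*} [Ring R] {r : R} {m d : ℕ}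
    (h : r ^ m = r ^ (m + d)) : ∀ j k, r ^ (m + j + k * d) = r ^ (m + j) := by
  have L1 : ∀ j, r ^ (m + d + j) = r ^ (m + j) := by
    intro j
    rw [pow_add, ← h, ← pow_add]
  intro j k
  induction k with
  | zero => simp
  | succ k ih =>
    have : m + j + (k + 1) * d = m + d + (j + k * d) := by ring
    rw [this, L1, ← add_assoc, ih]

private lemma exists_idem_pow {R : Type*} [Ring R] (hR : IsPeriodicRing R) (r : R) :
    ∃ e : ℕ, 1 ≤ e ∧ r ^ e = r ^ (2 * e) := by
  obtain ⟨m, n, hmn, h⟩ := hR r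
  wlog hlt : m < n generalizing m n
  · exact this n m (Ne.symm hmn) h.symm (by omega)
  set d := n - m with hd
  have hd1 : 1 ≤ d := by omega
  have h' : r ^ m = r ^ (m + d) := by rw [hd]; rwa [show m + (n - m) = n by omega]
  refine ⟨(m + 1) * d, Nat.mul_pos (by omega) hd1, ?_⟩
  have he : m < (m + 1) * d := by nlinarith
  have key := pow_stab h' ((m + 1) * d - m) (m + 1)
  rw [show m + ((m + 1) * d - m) = (m + 1) * d by omega] at key
  rw [← key]
  congr 1
  omega

private lemma exists_char {R : Type*} [Ring R] (hR : IsPeriodicRing R) :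
    ∃ c : ℕ, 1 ≤ c ∧ (c : R) = 0 := by
  obtain ⟨m, n, hmn, h⟩ := hR (2 : R)
  wlog hlt : m < n generalizing m n
  · exact this n m (Ne.symm hmn) h.symm (by omega)
  refine ⟨2 ^ n - 2 ^ m, ?_, ?_⟩
  · have := Nat.pow_lt_pow_right (by norm_num : 1 < 2) hlt
    omega
  · have hle : 2 ^ m ≤ 2 ^ n := Nat.pow_le_pow_right (by norm_num) hlt.le
    have : ((2 ^ n : ℕ) : R) = ((2 ^ m : ℕ) : R) := by push_cast; exact h.symm
    rw [Nat.cast_sub hle, this, sub_self]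

theorem trivialExtension_periodic_iff (R : Type*) [Ring R] (M : Type*) [AddCommGroup M]
    [Module R M] [Module Rᵐᵒᵖ M] [SMulCommClass R Rᵐᵒᵖ M] :
    IsPeriodicRing R ↔ IsPeriodicRing (TrivSqZeroExt R M) := by
  constructor
  · intro hR x
    obtain ⟨e, he1, he⟩ := exists_idem_pow hR x.fst
    obtain ⟨c, hc1, hc⟩ := exists_char hR
    set y := x ^ e with hy
    set s := y.fst with hs
    set v := y.snd with hv
    have hsx : s = x.fst ^ e := by rw [hs, hy, TrivSqZeroExt.fst_pow]
    have hidem : s * s = s := by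
      rw [hsx, ← pow_add, show e + e = 2 * e by ring, ← he]
    -- powers of s
    have hspow : ∀ j : ℕ, s ^ (j + 1) = s := by
      intro j
      induction j with
      | zero => simp
      | succ j ih => rw [pow_succ, ih, hidem]
    have hf : ∀ j : ℕ, (y ^ (j + 1)).fst = s := by
      intro j
      rw [TrivSqZeroExt.fst_pow, ← hs, hspow]
    set u := (MulOpposite.op s) • (s • v) with hu
    have hops : ∀ w : M, (MulOpposite.op s) • (MulOpposite.op s) • w = (MulOpposite.op s) • w := by
      intro w
      rw [smul_smul, ← MulOpposite.op_mul, hidem]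
    have h2 : (y ^ 2).snd = s • v + (MulOpposite.op s) • v := by
      rw [pow_two, TrivSqZeroExt.snd_mul, ← hs, ← hv]
    have key : ∀ k : ℕ, (y ^ (k + 2)).snd = (y ^ 2).snd + k • u := by
      intro k
      induction k with
      | zero => simp
      | succ k ih =>
        have hB : MulOpposite.op s • u = u := hops (s • v)
        have hC : MulOpposite.op s • (k • u) = k • u := by
          rw [← smul_comm, hB]
        rw [show k + 1 + 2 = (k + 2) + 1 from rfl, pow_succ, TrivSqZeroExt.snd_mul,
          hf (k + 1), ih, h2, ← hs, ← hv]
        rw [smul_add, smul_add, hops v, hC, ← hu, succ_nsmul]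
        abel
    have hcu : c • u = 0 := by
      rw [← Nat.cast_smul_eq_nsmul R c u, hc, zero_smul]
    refine ⟨2 * e, (c + 2) * e, ?_, ?_⟩
    · have : 2 * e < (c + 2) * e := by nlinarith
      omega
    · have h1 : x ^ (2 * e) = y ^ 2 := by rw [hy, ← pow_mul, mul_comm]
      have h2' : x ^ ((c + 2) * e) = y ^ (c + 2) := by rw [hy, ← pow_mul, mul_comm]
      rw [h1, h2']
      refine TrivSqZeroExt.ext ?_ ?_
      · rw [show (2 : ℕ) = 1 + 1 from rfl, hf 1, show c + 2 = c + 1 + 1 from rfl, hf (c + 1)]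
      · rw [key c, hcu, add_zero]
  · intro hT r
    obtain ⟨m, n, hmn, h⟩ := hT (TrivSqZeroExt.inl r)
    refine ⟨m, n, hmn, ?_⟩
    have := congrArg TrivSqZeroExt.fst h
    rwa [TrivSqZeroExt.fst_pow, TrivSqZeroExt.fst_pow, TrivSqZeroExt.fst_inl] at this
end

section
/- If R is a J-clean-like ring, then every nilpotent element of R lies in the Jacobson radical J(R). -/
/-- An element `p` is potent if `p = p ^ m` for some `m ≥ 2`. -/
def IsPotent {R : Type*} [Ring R] (p : R) : Prop :=
  ∃ m : ℕ, 2 ≤ m ∧ p = p ^ m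

/-- `x` lies in the Jacobson radical `J(R)` iff `1 - x * y` is a unit for every `y`. -/
def InJacobson {R : Type*} [Ring R] (x : R) : Prop :=
  ∀ y : R, IsUnit (1 - x * y)

/-- A ring is J-clean-like if every element is the sum of a potent element and an element
of the Jacobson radical. -/
def JCleanLikeRing (R : Type*) [Ring R] : Prop :=
  ∀ a : R, ∃ p : R, IsPotent p ∧ InJacobson (a - p)

private lemma isUnit_one_sub_swap {R : Type*} [Ring R] {a b : R}
    (h : IsUnit (1 - a * b)) : IsUnit (1 - b * a) := by
  obtain ⟨u, hu⟩ := h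
  have h1 : (1 - a * b) * ↑u⁻¹ = 1 := by rw [← hu]; exact u.mul_inv
  have h2 : (↑u⁻¹ : R) * (1 - a * b) = 1 := by rw [← hu]; exact u.inv_mul
  refine ⟨⟨1 - b * a, 1 + b * ↑u⁻¹ * a, ?_, ?_⟩, rfl⟩
  · calc (1 - b * a) * (1 + b * ↑u⁻¹ * a)
        = 1 + b * ((1 - a * b) * ↑u⁻¹) * a - b * a := by noncomm_ring
      _ = 1 := by rw [h1]; noncomm_ring
  · calc (1 + b * ↑u⁻¹ * a) * (1 - b * a)
        = 1 + b * ((↑u⁻¹ : R) * (1 - a * b)) * a - b * a := by noncomm_ring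
      _ = 1 := by rw [h2]; noncomm_ring

private lemma inJacobson_zero {R : Type*} [Ring R] : InJacobson (0 : R) := by
  intro y; simp

private lemma inJacobson_mul_right {R : Type*} [Ring R] {a : R} (h : InJacobson a) (r : R) :
    InJacobson (a * r) := by
  intro y
  have := h (r * y)
  rwa [← mul_assoc] at this

private lemma inJacobson_mul_left {R : Type*} [Ring R] {a : R} (h : InJacobson a) (r : R) :
    InJacobson (r * a) := by
  intro y
  have h1 : IsUnit (1 - a * (y * r)) := h (y * r)
  have h2 : IsUnit (1 - (a * y) * r) := by rwa [mul_assoc]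
  have h3 : IsUnit (1 - r * (a * y)) := isUnit_one_sub_swap h2
  rwa [← mul_assoc] at h3

private lemma inJacobson_neg {R : Type*} [Ring R] {a : R} (h : InJacobson a) :
    InJacobson (-a) := by
  have := inJacobson_mul_left h (-1)
  rwa [neg_one_mul] at this

private lemma inJacobson_add {R : Type*} [Ring R] {a b : R}
    (ha : InJacobson a) (hb : InJacobson b) : InJacobson (a + b) := by
  intro y
  obtain ⟨u, hu⟩ := ha y
  have h1 : IsUnit (1 - (b * y) * ↑u⁻¹) := by
    have := hb (y * ↑u⁻¹)
    rwa [← mul_assoc] at this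
  have h2 : IsUnit (1 - (↑u⁻¹ : R) * (b * y)) := isUnit_one_sub_swap h1
  have h3 : IsUnit ((↑u : R) * (1 - (↑u⁻¹ : R) * (b * y))) := u.isUnit.mul h2
  have key : (↑u : R) * (1 - (↑u⁻¹ : R) * (b * y)) = 1 - (a + b) * y := by
    have hmul : (↑u : R) * ↑u⁻¹ = 1 := u.mul_inv
    rw [mul_sub, ← mul_assoc, hmul, one_mul, hu]
    noncomm_ring
  rwa [key] at h3

theorem nilpotent_mem_jacobson_of_jCleanLike {R : Type*} [Ring R]
    (hR : JCleanLikeRing R) (x : R) (hx : IsNilpotent x) : InJacobson x := by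
  obtain ⟨n, hn⟩ := hx
  obtain ⟨p, ⟨m, hm2, hpm⟩, hj⟩ := hR x
  -- p^k - x^k ∈ J for all k
  have hdiff : ∀ k : ℕ, InJacobson (p ^ k - x ^ k) := by
    intro k
    induction k with
    | zero => simpa using inJacobson_zero
    | succ k ih =>
      have h1 : InJacobson ((p ^ k - x ^ k) * p) := inJacobson_mul_right ih p
      have h2 : InJacobson (x ^ k * (x - p)) := inJacobson_mul_left hj (x ^ k)
      have h3 : InJacobson ((p ^ k - x ^ k) * p + -(x ^ k * (x - p))) :=
        inJacobson_add h1 (inJacobson_neg h2)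
      have hEq : p ^ (k + 1) - x ^ (k + 1) =
          (p ^ k - x ^ k) * p + -(x ^ k * (x - p)) := by
        rw [pow_succ, pow_succ]; noncomm_ring
      rwa [hEq]
  have hpn : InJacobson (p ^ n) := by
    have := hdiff n
    rwa [hn, sub_zero] at this
  -- p = p ^ (m ^ k) for all k
  have hppow : ∀ k : ℕ, p = p ^ (m ^ k) := by
    intro k
    induction k with
    | zero => simp
    | succ k ih =>
      rw [pow_succ, pow_mul, ← ih, ← hpm]
  have hlt : n ≤ m ^ n := le_of_lt (Nat.lt_pow_self (n := n) (lt_of_lt_of_le one_lt_two hm2))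
  have hp : InJacobson p := by
    have h1 : p = p ^ (m ^ n - n) * p ^ n := by
      rw [pow_sub_mul_pow p hlt, ← hppow n]
    rw [h1]
    exact inJacobson_mul_left hpn _
  have := inJacobson_add hp (inJacobson_neg (inJacobson_neg hj))
  simpa using this
end
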